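/- Let ŵ_i be unbiased estimators of w_i. Partition [n] into q subsets by assigning each item independently and uniformly at random to one of q classes. Then the expected total variance summed over all q classes equals (1−1/q)·∑_i Var[ŵ_i] + (1/q)·Var[ŵ_{[n]}]. -/

import Mathlib

open MeasureTheory ProbabilityTheory Finset

private lemma integrable_mul_of_memL2 {Ω : Type*} [MeasurableSpace Ω] {μ : Measure Ω}
    [IsProbabilityMeasure μ] {f g : Ω → ℝ} (hf : MemLp f 2 μ) (hg : MemLp g 2 μ) :
    Integrable (fun ω => f ω * g ω) μ := by
  have h := (((hf.add hg).integrable_sq.sub hf.integrable_sq).sub hg.integrable_sq).div_const 2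
  have heq : (fun ω => f ω * g ω)
      = fun ω => (((f ω + g ω) ^ 2 - f ω ^ 2) - g ω ^ 2) / 2 := by
    ext ω; ring
  rw [heq]
  exact h

open scoped Classical in
/-- Random partition into `q` classes: each item is assigned independently and
uniformly to one of `q` classes. The expected total variance summed over all
`q` classes equals `(1 − 1/q)·ΣV + (1/q)·VΣ`. -/
theorem avg_total_variance_random_partition
    {Ω : Type*} [MeasurableSpace Ω] (μ : Measure Ω) [IsProbabilityMeasure μ]
    (n q : ℕ) (hq : 1 ≤ q)
    (w : Fin n → ℝ) (what : Fin n → Ω → ℝ)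
    (hL2 : ∀ i, MemLp (what i) 2 μ)
    (hunb : ∀ i, ∫ ω, what i ω ∂μ = w i) :
    (∑ g : Fin n → Fin q, ∑ c : Fin q,
        variance (fun ω => ∑ i ∈ Finset.univ.filter (fun i => g i = c), what i ω) μ)
        / ((q : ℝ) ^ n)
      = (1 - 1 / (q : ℝ)) * ∑ i, variance (what i) μ
          + (1 / (q : ℝ)) * variance (fun ω => ∑ i, what i ω) μ := by
  have hq0 : (q : ℝ) ≠ 0 := by
    exact_mod_cast Nat.one_le_iff_ne_zero.mp hq
  have hqn0 : ((q : ℝ) ^ n) ≠ 0 := pow_ne_zero _ hq0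
  -- centered estimators
  set Y : Fin n → Ω → ℝ := fun i ω => what i ω - w i with hY
  have hY2 : ∀ i, MemLp (Y i) 2 μ := fun i => (hL2 i).sub (memLp_const (w i))
  set cov : Fin n → Fin n → ℝ := fun i j => ∫ ω, Y i ω * Y j ω ∂μ with hcov
  have covInt : ∀ i j : Fin n, Integrable (fun ω => Y i ω * Y j ω) μ :=
    fun i j => integrable_mul_of_memL2 (hY2 i) (hY2 j)
  -- variance of a class sum as a double sum of covariances
  have hvarS : ∀ S : Finset (Fin n),
      variance (fun ω => ∑ i ∈ S, what i ω) μ = ∑ i ∈ S, ∑ j ∈ S, cov i j := by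
    intro S
    have hSL2 : MemLp (fun ω => ∑ i ∈ S, what i ω) 2 μ := by
      have h := memLp_finset_sum' S (fun i (_ : i ∈ S) => hL2 i)
      have he : (∑ i ∈ S, what i) = fun ω => ∑ i ∈ S, what i ω := by
        ext ω; simp
      rwa [he] at h
    rw [variance_eq_integral hSL2.aestronglyMeasurable.aemeasurable]
    have hmean : (∫ ω, (∑ i ∈ S, what i ω) ∂μ) = ∑ i ∈ S, w i := by
      rw [integral_finset_sum _ (fun i _ => (hL2 i).integrable one_le_two)]
      exact Finset.sum_congr rfl fun i _ => hunb i
    have hpt : ∀ ω : Ω, ((∑ i ∈ S, what i ω) - ∑ i ∈ S, w i) ^ 2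
        = ∑ i ∈ S, ∑ j ∈ S, Y i ω * Y j ω := by
      intro ω
      rw [← Finset.sum_sub_distrib, sq, Finset.sum_mul_sum]
    simp only [Pi.pow_apply, Pi.sub_apply, hmean, hpt]
    rw [integral_finset_sum _ (fun i _ => integrable_finset_sum _ (fun j _ => covInt i j))]
    exact Finset.sum_congr rfl fun i _ =>
      integral_finset_sum _ (fun j _ => covInt i j)
  -- single variances
  have hvar1 : ∀ i, variance (what i) μ = cov i i := by
    intro i
    have := hvarS {i}
    simpa using this
  -- the total variance
  have hvartot : variance (fun ω => ∑ i, what i ω) μ = ∑ i, ∑ j, cov i j := hvarS univ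
  -- counting lemma for i ≠ j
  have hcount : ∀ i j : Fin n, i ≠ j →
      (∑ g : Fin n → Fin q, (if g i = g j then (1 : ℝ) else 0)) = (q : ℝ) ^ n / q := by
    intro i j hij
    have hn : 1 ≤ n := Nat.one_le_iff_ne_zero.mpr (by rintro rfl; exact i.elim0)
    have key : (∑ g : Fin n → Fin q, (if g i = g j then (1 : ℝ) else 0))
        = ∑ p : Fin q × ({ k // k ≠ i } → Fin q),
            (if p.1 = p.2 ⟨j, hij.symm⟩ then (1 : ℝ) else 0) := by
      refine (Fintype.sum_equiv (Equiv.funSplitAt i (Fin q)).symm _ _ ?_).symm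
      intro p
      have h1 : (Equiv.funSplitAt i (Fin q)).symm p i = p.1 := by
        simp [Equiv.funSplitAt_symm_apply]
      have h2 : (Equiv.funSplitAt i (Fin q)).symm p j = p.2 ⟨j, hij.symm⟩ := by
        simp [Equiv.funSplitAt_symm_apply, hij.symm]
      rw [h1, h2]
    rw [key, Fintype.sum_prod_type_right]
    have hinner : ∀ h : { k // k ≠ i } → Fin q,
        (∑ a : Fin q, (if a = h ⟨j, hij.symm⟩ then (1 : ℝ) else 0)) = 1 := by
      intro h
      rw [Finset.sum_ite_eq' Finset.univ (h ⟨j, hij.symm⟩) (fun _ => (1 : ℝ))]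
      simp
    calc (∑ h : { k // k ≠ i } → Fin q, ∑ a : Fin q,
            (if a = h ⟨j, hij.symm⟩ then (1 : ℝ) else 0))
        = ∑ _h : { k // k ≠ i } → Fin q, (1 : ℝ) := by
          exact Finset.sum_congr rfl fun h _ => hinner h
      _ = (Fintype.card ({ k // k ≠ i } → Fin q) : ℝ) := by
          simp
      _ = (q : ℝ) ^ (n - 1) := by
          rw [Fintype.card_fun]
          have : Fintype.card { k : Fin n // k ≠ i } = n - 1 := by
            simp [Fintype.card_subtype_compl, Fintype.card_subtype_eq]
          rw [this, Fintype.card_fin]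
          push_cast
          ring
      _ = (q : ℝ) ^ n / q := by
          rw [eq_div_iff hq0, ← pow_succ, Nat.sub_add_cancel hn]
  -- diagonal count
  have hcountd : ∀ i : Fin n,
      (∑ g : Fin n → Fin q, (if g i = g i then (1 : ℝ) else 0)) = (q : ℝ) ^ n := by
    intro i
    simp [Finset.card_univ]
  -- reduce the numerator
  have hnum : (∑ g : Fin n → Fin q, ∑ c : Fin q,
      variance (fun ω => ∑ i ∈ Finset.univ.filter (fun i => g i = c), what i ω) μ)
      = ∑ i, ∑ j, cov i j * (if i = j then (q : ℝ) ^ n else (q : ℝ) ^ n / q) := by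
    have step1 : ∀ (g : Fin n → Fin q) (c : Fin q),
        variance (fun ω => ∑ i ∈ Finset.univ.filter (fun i => g i = c), what i ω) μ
        = ∑ i, ∑ j, (if g i = c ∧ g j = c then cov i j else 0) := by
      intro g c
      rw [hvarS]
      rw [Finset.sum_filter]
      refine Finset.sum_congr rfl fun i _ => ?_
      by_cases hgi : g i = c
      · rw [if_pos hgi, Finset.sum_filter]
        exact Finset.sum_congr rfl fun j _ => by simp [hgi]
      · rw [if_neg hgi]
        simp [hgi]
    calc (∑ g : Fin n → Fin q, ∑ c : Fin q,
            variance (fun ω => ∑ i ∈ Finset.univ.filter (fun i => g i = c), what i ω) μ)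
        = ∑ g : Fin n → Fin q, ∑ c : Fin q, ∑ i, ∑ j,
            (if g i = c ∧ g j = c then cov i j else 0) := by
          exact Finset.sum_congr rfl fun g _ => Finset.sum_congr rfl fun c _ => step1 g c
      _ = ∑ g : Fin n → Fin q, ∑ i, ∑ j, ∑ c : Fin q,
            (if g i = c ∧ g j = c then cov i j else 0) := by
          refine Finset.sum_congr rfl fun g _ => ?_
          rw [Finset.sum_comm]
          exact Finset.sum_congr rfl fun i _ => Finset.sum_comm
      _ = ∑ g : Fin n → Fin q, ∑ i, ∑ j, (if g i = g j then cov i j else 0) := by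
          refine Finset.sum_congr rfl fun g _ => Finset.sum_congr rfl fun i _ =>
            Finset.sum_congr rfl fun j _ => ?_
          simp only [ite_and]
          rw [Finset.sum_ite_eq Finset.univ (g i) (fun c => if g j = c then cov i j else 0)]
          simp [eq_comm]
      _ = ∑ i, ∑ j, ∑ g : Fin n → Fin q, (if g i = g j then cov i j else 0) := by
          rw [Finset.sum_comm]
          exact Finset.sum_congr rfl fun i _ => Finset.sum_comm
      _ = ∑ i, ∑ j, cov i j * ∑ g : Fin n → Fin q, (if g i = g j then (1:ℝ) else 0) := by
          refine Finset.sum_congr rfl fun i _ => Finset.sum_congr rfl fun j _ => ?_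
          rw [Finset.mul_sum]
          refine Finset.sum_congr rfl fun g _ => ?_
          by_cases h : g i = g j <;> simp [h]
      _ = ∑ i, ∑ j, cov i j * (if i = j then (q : ℝ) ^ n else (q : ℝ) ^ n / q) := by
          refine Finset.sum_congr rfl fun i _ => Finset.sum_congr rfl fun j _ => ?_
          by_cases hij : i = j
          · subst hij; rw [hcountd i, if_pos rfl]
          · rw [hcount i j hij, if_neg hij]
  rw [hnum, hvartot]
  rw [Finset.sum_div]
  have : ∀ i : Fin n, (∑ j, cov i j * (if i = j then (q : ℝ) ^ n else (q : ℝ) ^ n / q)) / (q:ℝ)^n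
      = ∑ j, (cov i j * (1/q) + if i = j then cov i j * (1 - 1/q) else 0) := by
    intro i
    rw [Finset.sum_div]
    refine Finset.sum_congr rfl fun j _ => ?_
    by_cases hij : i = j
    · rw [if_pos hij, if_pos hij]
      field_simp
      ring
    · rw [if_neg hij, if_neg hij]
      field_simp
      ring
  rw [Finset.sum_congr rfl (fun i _ => this i)]
  have expand : ∀ i : Fin n,
      (∑ j, (cov i j * (1/(q:ℝ)) + if i = j then cov i j * (1 - 1/q) else 0))
      = (∑ j, cov i j) * (1/q) + cov i i * (1 - 1/q) := by
    intro i
    rw [Finset.sum_add_distrib, Finset.sum_ite_eq Finset.univ i (fun j => cov i j * (1 - 1/(q:ℝ)))]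
    simp [Finset.sum_mul]
  rw [Finset.sum_congr rfl (fun i _ => expand i), Finset.sum_add_distrib]
  rw [← Finset.sum_mul]
  have : (∑ i, variance (what i) μ) = ∑ i, cov i i :=
    Finset.sum_congr rfl fun i _ => hvar1 i
  rw [this, ← Finset.sum_mul]
  ring
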